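/- Let p ∈ (0,1) and 0 < γ < Γ. For all x ∈ [γ,Γ]: p·(1−p)·Γ^(p−2)·(Γ−x)·(x−γ)/2 ≤ x^p − ((Γ−x)·γ^p + (x−γ)·Γ^p)/(Γ−γ) ≤ p·(1−p)·γ^(p−2)·(Γ−x)·(x−γ)/2. -/

import Mathlib

open Set

lemma aux_concave (p c γ Γ : ℝ) (hγ : 0 < γ) :
    (∀ t ∈ Set.Ioo γ Γ, p * (p - 1) * t ^ (p - 2) + c ≤ 0) →
    ConcaveOn ℝ (Set.Icc γ Γ) (fun t => t ^ p - c * ((Γ - t) * (t - γ)) / 2) := by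
  intro hc
  have hint : interior (Set.Icc γ Γ) = Set.Ioo γ Γ := interior_Icc
  refine concaveOn_of_hasDerivWithinAt2_nonpos (f' := fun t => p * t ^ (p - 1) - c * (Γ + γ - 2 * t) / 2)
    (f'' := fun t => p * (p - 1) * t ^ (p - 2) + c) (convex_Icc _ _) ?_ ?_ ?_ ?_
  · apply ContinuousOn.sub
    · exact (continuousOn_id.rpow_const fun t ht => Or.inl (ne_of_gt (lt_of_lt_of_le hγ ht.1)))
    · fun_prop
  · rw [hint]
    intro t ht
    have htpos : 0 < t := lt_trans hγ ht.1
    have h1 : HasDerivAt (fun u : ℝ => u ^ p) (p * t ^ (p - 1)) t :=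
      Real.hasDerivAt_rpow_const (Or.inl htpos.ne')
    have h2 := ((((hasDerivAt_const t Γ).sub (hasDerivAt_id t)).mul
      ((hasDerivAt_id t).sub (hasDerivAt_const t γ))).const_mul c).div_const 2
    have := h1.sub h2
    convert this.hasDerivWithinAt using 1
    · rfl
    · rfl
    · funext u; simp only [Pi.sub_apply, Pi.mul_apply, id_eq]
    · simp only [Pi.sub_apply, id_eq]; ring
  · rw [hint]
    intro t ht
    have htpos : 0 < t := lt_trans hγ ht.1
    have h1 : HasDerivAt (fun u : ℝ => p * u ^ (p - 1)) (p * ((p - 1) * t ^ (p - 1 - 1))) t :=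
      (Real.hasDerivAt_rpow_const (p := p - 1) (Or.inl htpos.ne')).const_mul p
    have h2 := ((((hasDerivAt_const t (Γ + γ)).sub ((hasDerivAt_id t).const_mul 2)).const_mul c).div_const 2)
    simp only [id_eq] at h2
    have := h1.sub h2
    convert this.hasDerivWithinAt using 1
    · rfl
    · rfl
    · funext u; simp only [Pi.sub_apply]
    · rw [show p - 1 - 1 = p - 2 by ring]; ring
  · rw [hint]; exact hc

lemma aux_convex (p c γ Γ : ℝ) (hγ : 0 < γ) :
    (∀ t ∈ Set.Ioo γ Γ, 0 ≤ p * (p - 1) * t ^ (p - 2) + c) →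
    ConvexOn ℝ (Set.Icc γ Γ) (fun t => t ^ p - c * ((Γ - t) * (t - γ)) / 2) := by
  intro hc
  have hint : interior (Set.Icc γ Γ) = Set.Ioo γ Γ := interior_Icc
  refine convexOn_of_hasDerivWithinAt2_nonneg (f' := fun t => p * t ^ (p - 1) - c * (Γ + γ - 2 * t) / 2)
    (f'' := fun t => p * (p - 1) * t ^ (p - 2) + c) (convex_Icc _ _) ?_ ?_ ?_ ?_
  · apply ContinuousOn.sub
    · exact (continuousOn_id.rpow_const fun t ht => Or.inl (ne_of_gt (lt_of_lt_of_le hγ ht.1)))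
    · fun_prop
  · rw [hint]
    intro t ht
    have htpos : 0 < t := lt_trans hγ ht.1
    have h1 : HasDerivAt (fun u : ℝ => u ^ p) (p * t ^ (p - 1)) t :=
      Real.hasDerivAt_rpow_const (Or.inl htpos.ne')
    have h2 := ((((hasDerivAt_const t Γ).sub (hasDerivAt_id t)).mul
      ((hasDerivAt_id t).sub (hasDerivAt_const t γ))).const_mul c).div_const 2
    have := h1.sub h2
    convert this.hasDerivWithinAt using 1
    · rfl
    · rfl
    · funext u; simp only [Pi.sub_apply, Pi.mul_apply, id_eq]
    · simp only [Pi.sub_apply, id_eq]; ring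
  · rw [hint]
    intro t ht
    have htpos : 0 < t := lt_trans hγ ht.1
    have h1 : HasDerivAt (fun u : ℝ => p * u ^ (p - 1)) (p * ((p - 1) * t ^ (p - 1 - 1))) t :=
      (Real.hasDerivAt_rpow_const (p := p - 1) (Or.inl htpos.ne')).const_mul p
    have h2 := ((((hasDerivAt_const t (Γ + γ)).sub ((hasDerivAt_id t).const_mul 2)).const_mul c).div_const 2)
    simp only [id_eq] at h2
    have := h1.sub h2
    convert this.hasDerivWithinAt using 1
    · rfl
    · rfl
    · funext u; simp only [Pi.sub_apply]
    · rw [show p - 1 - 1 = p - 2 by ring]; ring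
  · rw [hint]; exact hc

theorem stmt_13 (p : ℝ) (hp : p ∈ Set.Ioo (0:ℝ) 1) (γ Γ : ℝ) (hγ : 0 < γ) (hγΓ : γ < Γ)
    (x : ℝ) (hx : x ∈ Set.Icc γ Γ) :
    p * (1 - p) * Γ ^ (p - 2) * (Γ - x) * (x - γ) / 2
      ≤ x ^ p - ((Γ - x) * γ ^ p + (x - γ) * Γ ^ p) / (Γ - γ) ∧
    x ^ p - ((Γ - x) * γ ^ p + (x - γ) * Γ ^ p) / (Γ - γ)
      ≤ p * (1 - p) * γ ^ (p - 2) * (Γ - x) * (x - γ) / 2 := by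
  obtain ⟨hp0, hp1⟩ := hp
  obtain ⟨hx1, hx2⟩ := hx
  have hΓγ : (0:ℝ) < Γ - γ := by linarith
  set a : ℝ := (Γ - x) / (Γ - γ) with ha_def
  set b : ℝ := (x - γ) / (Γ - γ) with hb_def
  have ha : 0 ≤ a := div_nonneg (by linarith) hΓγ.le
  have hb : 0 ≤ b := div_nonneg (by linarith) hΓγ.le
  have hab : a + b = 1 := by
    rw [ha_def, hb_def, ← add_div, div_eq_one_iff_eq hΓγ.ne']; ring
  have hcomb : a * γ + b * Γ = x := by
    rw [ha_def, hb_def]; field_simp; ring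
  have hmemγ : γ ∈ Set.Icc γ Γ := ⟨le_refl _, hγΓ.le⟩
  have hmemΓ : Γ ∈ Set.Icc γ Γ := ⟨hγΓ.le, le_refl _⟩
  have hD : ((Γ - x) * γ ^ p + (x - γ) * Γ ^ p) / (Γ - γ) = a * γ ^ p + b * Γ ^ p := by
    rw [ha_def, hb_def]; ring
  have hppos : 0 < p * (1 - p) := mul_pos hp0 (by linarith)
  constructor
  · set c : ℝ := p * (1 - p) * Γ ^ (p - 2) with hc_def
    have hconc := aux_concave p c γ Γ hγ ?_
    · have := hconc.2 hmemγ hmemΓ ha hb hab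
      simp only [smul_eq_mul, hcomb] at this
      have e1 : (Γ - γ) * (γ - γ) = 0 := by ring
      have e2 : (Γ - Γ) * (Γ - γ) = 0 := by ring
      rw [e1, e2] at this
      simp only [mul_zero, zero_div, sub_zero] at this
      rw [hD]
      nlinarith [this]
    · intro t ht
      have htpos : 0 < t := lt_trans hγ ht.1
      have hle : Γ ^ (p - 2) ≤ t ^ (p - 2) :=
        Real.rpow_le_rpow_of_nonpos htpos ht.2.le (by linarith)
      rw [hc_def]
      nlinarith
  · set c : ℝ := p * (1 - p) * γ ^ (p - 2) with hc_def
    have hconv := aux_convex p c γ Γ hγ ?_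
    · have := hconv.2 hmemγ hmemΓ ha hb hab
      simp only [smul_eq_mul, hcomb] at this
      have e1 : (Γ - γ) * (γ - γ) = 0 := by ring
      have e2 : (Γ - Γ) * (Γ - γ) = 0 := by ring
      rw [e1, e2] at this
      simp only [mul_zero, zero_div, sub_zero] at this
      rw [hD]
      nlinarith [this]
    · intro t ht
      have htpos : 0 < t := lt_trans hγ ht.1
      have hle : t ^ (p - 2) ≤ γ ^ (p - 2) :=
        Real.rpow_le_rpow_of_nonpos hγ ht.1.le (by linarith)
      rw [hc_def]
      nlinarith
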